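/- Let E be a 3-dimensional F₂-vector space and let (M₁, M₂), (M₁', M₂') be two ordered pairs of distinct order-7 subgroups of GL(E). Then the set {h ∈ GL(E) : h M₁ h⁻¹ = M₁' and h M₂ h⁻¹ = M₂'} has exactly 3 elements. -/

import Mathlib

open MulAction Subgroup


section GroupTheory

variable {G : Type*} [Group G] [Finite G]

private lemma fac168 : (168:ℕ).factorization 7 = 1 := by
  have : (168:ℕ) = 7^1 * 24 := by norm_num
  rw [this, Nat.factorization_mul (by norm_num) (by norm_num),
    Nat.Prime.factorization_pow (by norm_num)]
  simp [Nat.factorization_eq_zero_of_not_dvd (by norm_num : ¬ (7:ℕ) ∣ 24)]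

variable [Fact (Nat.Prime 7)]

private lemma sylow_card7 (hG : Nat.card G = 168) (P : Sylow 7 G) :
    Nat.card (P : Subgroup G) = 7 := by
  rw [P.card_eq_multiplicity, hG, fac168, pow_one]

private lemma card_sylow_eq_8 (hG : Nat.card G = 168) (P Q : Sylow 7 G) (hPQ : P ≠ Q) :
    Nat.card (Sylow 7 G) = 8 := by
  have hdvd : Nat.card (Sylow 7 G) ∣ (P : Subgroup G).index := P.card_dvd_index
  have hindex : (P : Subgroup G).index = 24 := by
    have h := Subgroup.card_mul_index (P : Subgroup G)
    rw [sylow_card7 hG P, hG] at h; omega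
  have hmod : Nat.card (Sylow 7 G) % 7 = 1 % 7 := card_sylow_modEq_one 7 G
  have hne1 : Nat.card (Sylow 7 G) ≠ 1 := by
    intro h
    haveI := (Nat.card_eq_one_iff_unique.mp h).1
    exact hPQ (Subsingleton.elim P Q)
  rw [hindex] at hdvd
  have hle := Nat.le_of_dvd (by norm_num) hdvd
  interval_cases h : (Nat.card (Sylow 7 G)) <;> omega

private lemma card_normalizer (hG : Nat.card G = 168) (P Q : Sylow 7 G) (hPQ : P ≠ Q) :
    Nat.card ((Subgroup.normalizer (P : Set G))) = 21 := by
  have h8 : Nat.card (Sylow 7 G) = 8 := card_sylow_eq_8 hG P Q hPQ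
  have h := P.card_eq_index_normalizer
  have h2 := Subgroup.card_mul_index (Subgroup.normalizer (P : Set G))
  rw [hG] at h2; rw [h8] at h; rw [← h] at h2; omega

omit [Fact (Nat.Prime 7)] in
private lemma orbit_card_dvd {α β : Type*} [Group α] [Finite α] [MulAction α β] (b : β) :
    Nat.card (MulAction.orbit α b) ∣ Nat.card α := by
  rw [Nat.card_congr (MulAction.orbitEquivQuotientStabilizer α b)]
  exact Subgroup.index_dvd_card (MulAction.stabilizer α b)

private lemma orbit_P_card (hG : Nat.card G = 168) (P Q : Sylow 7 G) (hPQ : P ≠ Q) :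
    Nat.card (MulAction.orbit (P : Subgroup G) Q) = 7 := by
  have hdvd : Nat.card (MulAction.orbit (P : Subgroup G) Q) ∣ 7 := by
    have := orbit_card_dvd (α := (P : Subgroup G)) Q
    rwa [sylow_card7 hG P] at this
  rcases (Nat.Prime.eq_one_or_self_of_dvd (by norm_num) _ hdvd) with h1 | h7
  · exfalso
    haveI hsub := (Nat.card_eq_one_iff_unique.mp h1).1
    have hfix : ∀ g : (P : Subgroup G), g • Q = Q := by
      intro g
      have : (⟨g • Q, MulAction.mem_orbit Q g⟩ : MulAction.orbit (P : Subgroup G) Q)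
          = ⟨Q, MulAction.mem_orbit_self Q⟩ := Subsingleton.elim _ _
      exact congrArg Subtype.val this
    have hle : (P : Subgroup G) ≤ (Subgroup.normalizer (Q : Set G)) := by
      intro g hg
      exact Sylow.smul_eq_iff_mem_normalizer.mp (hfix ⟨g, hg⟩)
    have hle2 : (P : Subgroup G) ≤ (Q : Subgroup G) := by
      have h5 := P.isPGroup'.inf_normalizer_sylow Q
      rw [inf_eq_left.mpr hle] at h5
      rw [h5]; exact inf_le_right
    exact hPQ (Sylow.ext (Subgroup.eq_of_le_of_card_ge hle2
      (by rw [sylow_card7 hG P, sylow_card7 hG Q])))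
  · exact h7

private lemma orbit_N_card (hG : Nat.card G = 168) (P Q : Sylow 7 G) (hPQ : P ≠ Q) :
    Nat.card (MulAction.orbit ((Subgroup.normalizer (P : Set G))) Q) = 7 := by
  set n := Nat.card (MulAction.orbit ((Subgroup.normalizer (P : Set G))) Q) with hn
  have hdvd : n ∣ 21 := by
    rw [← card_normalizer hG P Q hPQ]; exact orbit_card_dvd Q
  have hge : 7 ≤ n := by
    rw [← orbit_P_card hG P Q hPQ]
    have hsub : MulAction.orbit (P : Subgroup G) Q ⊆
        MulAction.orbit ((Subgroup.normalizer (P : Set G))) Q := by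
      rintro x ⟨g, rfl⟩
      exact ⟨⟨g, Subgroup.le_normalizer g.2⟩, rfl⟩
    exact Nat.card_mono (Set.toFinite _) hsub
  have hle : n ≤ 8 := by
    rw [← card_sylow_eq_8 hG P Q hPQ]
    exact Nat.card_le_card_of_injective _ Subtype.val_injective
  interval_cases n <;> omega

private lemma card_inf_normalizer (hG : Nat.card G = 168) (P Q : Sylow 7 G) (hPQ : P ≠ Q) :
    Nat.card (((Subgroup.normalizer (P : Set G)) ⊓ (Subgroup.normalizer (Q : Set G)) : Subgroup G)) = 3 := by
  set K := (Subgroup.normalizer (P : Set G)) with hK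
  have horb : Nat.card (MulAction.orbit K Q) = 7 := orbit_N_card hG P Q hPQ
  have hKcard : Nat.card K = 21 := card_normalizer hG P Q hPQ
  have hoi : Nat.card (MulAction.orbit K Q) = (MulAction.stabilizer K Q).index :=
    Nat.card_congr (MulAction.orbitEquivQuotientStabilizer K Q)
  have hmi := Subgroup.card_mul_index (MulAction.stabilizer K Q)
  rw [hKcard] at hmi
  rw [hoi] at horb
  rw [horb] at hmi
  have hstab : Nat.card (MulAction.stabilizer K Q) = 3 := by omega
  have hst : MulAction.stabilizer K Q = ((Subgroup.normalizer (Q : Set G))).subgroupOf K := by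
    ext k
    rw [MulAction.mem_stabilizer_iff, Subgroup.mem_subgroupOf,
      ← Sylow.smul_eq_iff_mem_normalizer]
    rfl
  rw [hst, ← Subgroup.inf_subgroupOf_right,
    Nat.card_congr (Subgroup.subgroupOfEquivOfLe inf_le_right).toEquiv] at hstab
  rw [inf_comm] at hstab
  exact hstab

private lemma exists_conj_pair (hG : Nat.card G = 168) (P Q P' Q' : Sylow 7 G)
    (hPQ : P ≠ Q) (hPQ' : P' ≠ Q') : ∃ g : G, g • P = P' ∧ g • Q = Q' := by
  obtain ⟨g₀, hg₀⟩ := MulAction.exists_smul_eq G P P'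
  set R : Sylow 7 G := g₀ • Q with hR
  have hRP' : R ≠ P' := by
    intro h
    rw [← hg₀] at h
    exact hPQ (smul_left_cancel g₀ h).symm
  set K := ((Subgroup.normalizer (P' : Set G))) with hKdef
  have hfixP' : ∀ k : K, k • P' = P' := fun k => Sylow.smul_eq_iff_mem_normalizer.mpr k.2
  set S : Set (Sylow 7 G) := {P'}ᶜ with hS
  have hScard : S.ncard = 7 := by
    have h8 : Nat.card (Sylow 7 G) = 8 := card_sylow_eq_8 hG P' Q' hPQ'
    have hins : (insert P' ({P'}ᶜ : Set (Sylow 7 G))) = Set.univ := by ext x; by_cases h : x = P' <;> simp [h]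
    have h2 := Set.ncard_insert_of_notMem (by simp : P' ∉ ({P'}ᶜ : Set (Sylow 7 G)))
      (Set.toFinite _)
    rw [hins, Set.ncard_univ, h8] at h2
    rw [hS]; omega
  have horb : ∀ X : Sylow 7 G, X ≠ P' → MulAction.orbit K X = S := by
    intro X hX
    have hsub : MulAction.orbit K X ⊆ S := by
      rintro y ⟨k, rfl⟩ hy
      apply hX
      have hy' : (k : ↥K) • X = P' := hy
      have h2 : (k⁻¹ : ↥K) • ((k : ↥K) • X) = k⁻¹ • P' := by rw [hy']
      rw [inv_smul_smul, hfixP'] at h2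
      exact h2
    have hcard : Nat.card (MulAction.orbit K X) = 7 := orbit_N_card hG P' X (fun h => hX h.symm)
    apply Set.eq_of_subset_of_ncard_le hsub
    rw [hScard, ← Nat.card_coe_set_eq, hcard]
  have hQ' : Q' ∈ MulAction.orbit K R := by
    rw [horb R hRP', ← horb Q' (Ne.symm hPQ')]
    exact MulAction.mem_orbit_self Q'
  obtain ⟨k, hk⟩ := hQ'
  refine ⟨(k : G) * g₀, ?_, ?_⟩
  · rw [mul_smul, hg₀]
    exact hfixP' k
  · rw [mul_smul, ← hR]
    exact hk

end GroupTheory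

private lemma key {G : Type*} [Group G] [Finite G] (hG : Nat.card G = 168)
    (M₁ M₂ M₁' M₂' : Subgroup G)
    (h₁ : Nat.card M₁ = 7) (h₂ : Nat.card M₂ = 7)
    (h₁' : Nat.card M₁' = 7) (h₂' : Nat.card M₂' = 7)
    (hne : M₁ ≠ M₂) (hne' : M₁' ≠ M₂') :
    {h : G | M₁.map (MulAut.conj h).toMonoidHom = M₁' ∧
      M₂.map (MulAut.conj h).toMonoidHom = M₂'}.ncard = 3 := by
  haveI : Fact (Nat.Prime 7) := ⟨by norm_num⟩
  have hfac : ∀ (M : Subgroup G), Nat.card M = 7 →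
      Nat.card M = 7 ^ (Nat.card G).factorization 7 := by
    intro M h; rw [h, hG, fac168, pow_one]
  let P₁ : Sylow 7 G := Sylow.ofCard M₁ (hfac M₁ h₁)
  let P₂ : Sylow 7 G := Sylow.ofCard M₂ (hfac M₂ h₂)
  let P₁' : Sylow 7 G := Sylow.ofCard M₁' (hfac M₁' h₁')
  let P₂' : Sylow 7 G := Sylow.ofCard M₂' (hfac M₂' h₂')
  have hsmul : ∀ (h : G) (P : Sylow 7 G), ((h • P : Sylow 7 G) : Subgroup G)
      = (P : Subgroup G).map (MulAut.conj h).toMonoidHom := fun _ _ => rfl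
  have key_iff : ∀ (h : G) (P P' : Sylow 7 G),
      (P : Subgroup G).map (MulAut.conj h).toMonoidHom = (P' : Subgroup G) ↔ h • P = P' := by
    intro h P P'
    rw [← hsmul]
    exact ⟨fun hh => Sylow.ext hh, fun hh => congrArg (fun X : Sylow 7 G => (X : Subgroup G)) hh⟩
  have hPQ : P₁ ≠ P₂ := fun h => hne (congrArg (fun X : Sylow 7 G => (X : Subgroup G)) h)
  have hPQ' : P₁' ≠ P₂' := fun h => hne' (congrArg (fun X : Sylow 7 G => (X : Subgroup G)) h)
  obtain ⟨h₀, hA, hB⟩ := exists_conj_pair hG P₁ P₂ P₁' P₂' hPQ hPQ'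
  have hset : {h : G | M₁.map (MulAut.conj h).toMonoidHom = M₁' ∧
      M₂.map (MulAut.conj h).toMonoidHom = M₂'} =
      (fun x => h₀ * x) '' (((Subgroup.normalizer (P₁ : Set G)) ⊓ (Subgroup.normalizer (P₂ : Set G)) :
        Subgroup G) : Set G) := by
    ext h
    simp only [Set.mem_setOf_eq, Set.mem_image, SetLike.mem_coe]
    constructor
    · rintro ⟨ha, hb⟩
      have ha' : h • P₁ = P₁' := (key_iff h P₁ P₁').mp ha
      have hb' : h • P₂ = P₂' := (key_iff h P₂ P₂').mp hb
      refine ⟨h₀⁻¹ * h, Subgroup.mem_inf.mpr ⟨?_, ?_⟩, by group⟩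
      · rw [← Sylow.smul_eq_iff_mem_normalizer, mul_smul, ha', ← hA, inv_smul_smul]
      · rw [← Sylow.smul_eq_iff_mem_normalizer, mul_smul, hb', ← hB, inv_smul_smul]
    · rintro ⟨n, hn, rfl⟩
      obtain ⟨hn1, hn2⟩ := Subgroup.mem_inf.mp hn
      constructor
      · exact (key_iff _ P₁ P₁').mpr
          (by rw [mul_smul, Sylow.smul_eq_iff_mem_normalizer.mpr hn1, hA])
      · exact (key_iff _ P₂ P₂').mpr
          (by rw [mul_smul, Sylow.smul_eq_iff_mem_normalizer.mpr hn2, hB])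
  rw [hset, Set.ncard_image_of_injective _ (mul_right_injective h₀),
    ← Nat.card_coe_set_eq, SetLike.coe_sort_coe]
  exact card_inf_normalizer hG P₁ P₂ hPQ

private lemma card_aut168 (E : Type*) [AddCommGroup E] [Module (ZMod 2) E]
    (hdim : Module.finrank (ZMod 2) E = 3) : Nat.card (E ≃ₗ[ZMod 2] E) = 168 := by
  haveI : Module.Finite (ZMod 2) E := Module.finite_of_finrank_eq_succ hdim
  have e : E ≃ₗ[ZMod 2] (Fin 3 → ZMod 2) := LinearEquiv.ofFinrankEq _ _ (by
    rw [hdim, Module.finrank_fintype_fun_eq_card, Fintype.card_fin])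
  let φ : (E ≃ₗ[ZMod 2] E) ≃* ((Fin 3 → ZMod 2) ≃ₗ[ZMod 2] (Fin 3 → ZMod 2)) :=
  { toFun := fun f => (e.symm.trans f).trans e
    invFun := fun g => (e.trans g).trans e.symm
    left_inv := fun f => by ext x; simp
    right_inv := fun g => by ext x; simp
    map_mul' := fun f g => by
      ext x i
      show e (f (g (e.symm x))) i = e (f (e.symm (e (g (e.symm x))))) i
      rw [e.symm_apply_apply] }
  let ψ := (LinearMap.GeneralLinearGroup.generalLinearEquiv (ZMod 2) (Fin 3 → ZMod 2)).symm
  let χ : (LinearMap.GeneralLinearGroup (ZMod 2) (Fin 3 → ZMod 2)) ≃* GL (Fin 3) (ZMod 2) :=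
    Units.mapEquiv (LinearMap.toMatrixAlgEquiv (Pi.basisFun (ZMod 2) (Fin 3))).toRingEquiv.toMulEquiv
  rw [Nat.card_congr ((φ.trans ψ).trans χ).toEquiv, Matrix.card_GL_field]
  decide

/-- Given two ordered pairs `(M₁, M₂)` and `(M₁', M₂')` of distinct order-7
subgroups of `GL(E)` (with `E` 3-dimensional over `F₂`), there are exactly 3
elements `h` with `h M₁ h⁻¹ = M₁'` and `h M₂ h⁻¹ = M₂'`. -/
theorem stmt_15 (E : Type*) [AddCommGroup E] [Module (ZMod 2) E]
    (hdim : Module.finrank (ZMod 2) E = 3)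
    (M₁ M₂ M₁' M₂' : Subgroup (E ≃ₗ[ZMod 2] E))
    (h₁ : Nat.card M₁ = 7) (h₂ : Nat.card M₂ = 7)
    (h₁' : Nat.card M₁' = 7) (h₂' : Nat.card M₂' = 7)
    (hne : M₁ ≠ M₂) (hne' : M₁' ≠ M₂') :
    {h : E ≃ₗ[ZMod 2] E |
      M₁.map (MulAut.conj h).toMonoidHom = M₁' ∧
      M₂.map (MulAut.conj h).toMonoidHom = M₂'}.ncard = 3 := by
  have hcard := card_aut168 E hdim
  haveI : Finite (E ≃ₗ[ZMod 2] E) := Nat.finite_of_card_ne_zero (by rw [hcard]; norm_num)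
  exact key hcard M₁ M₂ M₁' M₂' h₁ h₂ h₁' h₂' hne hne'
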